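/- The number of spanning trees of the complete graph on n+1 vertices is (n+1)^(n-1). -/

import Mathlib

open SimpleGraph Finset

set_option linter.unusedSectionVars false

namespace CayleyAux

variable {V : Type*} [Fintype V] [LinearOrder V] [Nonempty V]

noncomputable local instance (priority := 10000) {α : Type*} (G : SimpleGraph α) : DecidableRel G.Adj :=
  Classical.decRel _

def IsTreeOn (S : Finset V) (T : SimpleGraph V) : Prop :=
  (∀ ⦃x y : V⦄, T.Adj x y → x ∈ S) ∧ (∀ x ∈ S, ∀ y ∈ S, T.Reachable x y) ∧ T.IsAcyclic

noncomputable def fmin (S : Finset V) : V :=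
  if h : S.Nonempty then S.min' h else Classical.arbitrary V

noncomputable def fmax (S : Finset V) : V :=
  if h : S.Nonempty then S.max' h else Classical.arbitrary V

lemma fmin_mem {S : Finset V} (h : S.Nonempty) : fmin S ∈ S := by
  rw [fmin, dif_pos h]; exact S.min'_mem h

lemma fmax_mem {S : Finset V} (h : S.Nonempty) : fmax S ∈ S := by
  rw [fmax, dif_pos h]; exact S.max'_mem h

lemma fmin_singleton (a : V) : fmin {a} = a := by
  have h : ({a} : Finset V).Nonempty := ⟨a, mem_singleton_self a⟩
  have := fmin_mem h
  simpa using this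

lemma fmin_ne_fmax {S : Finset V} (h : 2 ≤ S.card) : fmin S ≠ fmax S := by
  have h1 : S.Nonempty := card_pos.mp (by omega)
  rw [fmin, fmax, dif_pos h1, dif_pos h1]
  exact ne_of_lt (S.min'_lt_max'_of_card (by omega))


open scoped Classical in
noncomputable def minLeaf (S : Finset V) (T : SimpleGraph V) : V :=
  fmin (S.filter fun v => T.degree v = 1)

noncomputable def nbr (T : SimpleGraph V) (v : V) : V :=
  fmin (T.neighborFinset v)

noncomputable def encode : ℕ → Finset V → SimpleGraph V → List V
  | 0, _, _ => []
  | (k+1), S, T =>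
    let l := minLeaf S T
    let a := nbr T l
    a :: encode k (S.erase l) (T.deleteEdges {s(l, a)})

open scoped Classical in
noncomputable def decode : ℕ → Finset V → List V → SimpleGraph V
  | 0, S, _ => SimpleGraph.fromEdgeSet {s(fmin S, fmax S)}
  | (k+1), S, p =>
    match p with
    | [] => ⊥
    | a :: s =>
      let l := fmin (S \ (a :: s).toFinset)
      decode k (S.erase l) s ⊔ SimpleGraph.fromEdgeSet {s(l, a)}

lemma IsTreeOn.adj_mem {S : Finset V} {T : SimpleGraph V} (hT : IsTreeOn S T)
    {x y : V} (h : T.Adj x y) : x ∈ S ∧ y ∈ S :=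
  ⟨hT.1 h, hT.1 h.symm⟩

/-- lift reachability to the comap graph on the subtype -/
lemma reachable_comap {S : Finset V} {T : SimpleGraph V} (hT : IsTreeOn S T)
    {x y : V} (hx : x ∈ S) (hy : y ∈ S) (h : T.Reachable x y) :
    (T.comap ((↑) : {a // a ∈ S} → V)).Reachable ⟨x, hx⟩ ⟨y, hy⟩ := by
  obtain ⟨w⟩ := h
  induction w with
  | nil => exact Reachable.refl _
  | @cons u z v h p ih =>
    have hz : z ∈ S := (hT.adj_mem h).2
    exact (Adj.reachable (by exact h : (T.comap ((↑) : {a // a ∈ S} → V)).Adj ⟨u, hx⟩ ⟨z, hz⟩)).trans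
      (ih hz hy)

lemma isTree_comap {S : Finset V} {T : SimpleGraph V} (hT : IsTreeOn S T) (hS : S.Nonempty) :
    (T.comap ((↑) : {a // a ∈ S} → V)).IsTree := by
  constructor
  · have : Nonempty {a // a ∈ S} := ⟨⟨hS.choose, hS.choose_spec⟩⟩
    exact ⟨fun u v => reachable_comap hT u.2 v.2 (hT.2.1 u u.2 v v.2)⟩
  · intro v c hc
    have hinj : Function.Injective ((↑) : {a // a ∈ S} → V) := Subtype.val_injective
    have := hc.map (f := SimpleGraph.Hom.comap _ T) hinj
    exact hT.2.2 _ this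

lemma degree_comap {S : Finset V} {T : SimpleGraph V} (hT : IsTreeOn S T)
    {v : V} (hv : v ∈ S) :
    (T.comap ((↑) : {a // a ∈ S} → V)).degree ⟨v, hv⟩ = T.degree v := by
  rw [← card_neighborSet_eq_degree, ← card_neighborSet_eq_degree]
  apply Fintype.card_congr
  refine ⟨fun ⟨u, hu⟩ => ⟨u.1, hu⟩, fun ⟨u, hu⟩ => ⟨⟨u, (hT.adj_mem hu).2⟩, hu⟩, ?_, ?_⟩
  · rintro ⟨⟨u, hu'⟩, hu⟩; rfl
  · rintro ⟨u, hu⟩; rfl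

lemma degree_pos {S : Finset V} {T : SimpleGraph V} (hT : IsTreeOn S T)
    (h2 : 2 ≤ S.card) {v : V} (hv : v ∈ S) : 0 < T.degree v := by
  obtain ⟨u, hu, huv⟩ : ∃ u ∈ S, u ≠ v := by
    obtain ⟨a, ha, b, hb, hab⟩ := Finset.one_lt_card.mp (by omega : 1 < S.card)
    rcases eq_or_ne a v with rfl | h'
    · exact ⟨b, hb, fun e => hab e.symm⟩
    · exact ⟨a, ha, h'⟩
  obtain ⟨w⟩ := hT.2.1 v hv u hu
  have hw : ¬ w.Nil := SimpleGraph.Walk.not_nil_of_ne (Ne.symm huv)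
  rw [degree_pos_iff_exists_adj]
  exact ⟨_, (w.firstDart hw).adj⟩

lemma exists_leaf {S : Finset V} {T : SimpleGraph V} (hT : IsTreeOn S T)
    (h2 : 2 ≤ S.card) : ∃ v ∈ S, T.degree v = 1 := by
  by_contra hcon
  push_neg at hcon
  set G' := T.comap ((↑) : {a // a ∈ S} → V) with hG'
  have htree : G'.IsTree := isTree_comap hT (card_pos.mp (by omega))
  have hedge : G'.edgeFinset.card + 1 = Fintype.card {a // a ∈ S} := htree.card_edgeFinset
  have hcards : Fintype.card {a // a ∈ S} = S.card := Fintype.card_coe S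
  have hsum : ∑ v : {a // a ∈ S}, G'.degree v = 2 * G'.edgeFinset.card :=
    sum_degrees_eq_twice_card_edges G'
  have hge : ∀ v : {a // a ∈ S}, 2 ≤ G'.degree v := by
    intro v
    rw [degree_comap hT v.2]
    have h1 := degree_pos hT h2 v.2
    have h1' := hcon v.1 v.2
    omega
  have : 2 * S.card ≤ ∑ v : {a // a ∈ S}, G'.degree v := by
    calc 2 * S.card = ∑ _v : {a // a ∈ S}, 2 := by
          rw [Finset.sum_const, smul_eq_mul, card_univ, hcards, mul_comm]
      _ ≤ _ := Finset.sum_le_sum fun v _ => hge v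
  omega


variable {S : Finset V} {T : SimpleGraph V}

/-- the unique tree on a two-element set -/
lemma isTreeOn_pair (h2 : S.card = 2) :
    IsTreeOn S (SimpleGraph.fromEdgeSet {s(fmin S, fmax S)}) := by
  have hne : S.Nonempty := card_pos.mp (by omega)
  have hmm : fmin S ≠ fmax S := fmin_ne_fmax (by omega)
  have hadj : (SimpleGraph.fromEdgeSet {s(fmin S, fmax S)}).Adj (fmin S) (fmax S) := by
    rw [fromEdgeSet_adj]; exact ⟨rfl, hmm⟩
  refine ⟨?_, ?_, ?_⟩
  · intro x y h
    rw [fromEdgeSet_adj, Set.mem_singleton_iff, Sym2.eq_iff] at h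
    rcases h.1 with ⟨rfl, rfl⟩ | ⟨rfl, rfl⟩
    · exact fmin_mem hne
    · exact fmax_mem hne
  · have hS : S = {fmin S, fmax S} := by
      refine (Finset.eq_of_subset_of_card_le ?_ ?_).symm
      · intro x hx
        simp only [mem_insert, mem_singleton] at hx
        rcases hx with rfl | rfl
        · exact fmin_mem hne
        · exact fmax_mem hne
      · rw [h2, Finset.card_insert_of_notMem (by simpa using hmm), card_singleton]
    intro x hx y hy
    rw [hS] at hx hy
    simp only [mem_insert, mem_singleton] at hx hy
    rcases hx with rfl | rfl <;> rcases hy with rfl | rfl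
    · exact Reachable.refl _
    · exact hadj.reachable
    · exact hadj.symm.reachable
    · exact Reachable.refl _
  · intro v c hc
    have h3 := hc.three_le_length
    have hmemedges : ∀ e ∈ c.edges, e = s(fmin S, fmax S) := by
      intro e he
      have := c.edges_subset_edgeSet he
      rw [edgeSet_fromEdgeSet] at this
      exact this.1
    have hnd := hc.edges_nodup
    have hlen : c.edges.length = c.length := c.length_edges
    rcases hedges : c.edges with _ | ⟨e1, rest⟩
    · rw [hedges] at hlen; simp at hlen; omega
    rcases rest with _ | ⟨e2, rest2⟩
    · rw [hedges] at hlen; simp at hlen; omega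
    rw [hedges] at hnd hmemedges
    have h1 : e1 = s(fmin S, fmax S) := hmemedges _ (by simp)
    have hb : e2 = s(fmin S, fmax S) := hmemedges _ (by simp)
    rw [List.nodup_cons] at hnd
    exact hnd.1 (by rw [h1, hb]; simp)

lemma nbr_adj {v : V} (hd : T.degree v = 1) : T.Adj v (nbr T v) := by
  obtain ⟨a, ha⟩ := Finset.card_eq_one.mp hd
  have : nbr T v = a := by rw [nbr, ha, fmin_singleton]
  rw [this, ← mem_neighborFinset, ha]
  exact mem_singleton_self a

lemma nbr_eq {v x : V} (hd : T.degree v = 1) (h : T.Adj v x) : x = nbr T v := by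
  obtain ⟨a, ha⟩ := Finset.card_eq_one.mp hd
  have h1 : nbr T v = a := by rw [nbr, ha, fmin_singleton]
  rw [← mem_neighborFinset, ha, mem_singleton] at h
  rw [h, h1]

/-- in a walk starting at `ℓ` whose only possible neighbor is `a`, the first step goes to
`a`: the edge `s(ℓ,a)` is used and `a` is in the tail of the support. -/
lemma start_edge_mem {G : SimpleGraph V} {l a v : V} (hu : ∀ z, G.Adj l z → z = a)
    (w : G.Walk l v) (hw : ¬ w.Nil) : s(l, a) ∈ w.edges ∧ a ∈ w.support.tail := by
  cases w with
  | nil => simp at hw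
  | cons h p =>
    have hz := hu _ h
    subst hz
    exact ⟨by simp, by simp [Walk.support_cons]⟩
lemma isTreeOn_pair_unique (hT : IsTreeOn S T) (h2 : S.card = 2) :
    T = SimpleGraph.fromEdgeSet {s(fmin S, fmax S)} := by
  have hne : S.Nonempty := card_pos.mp (by omega)
  have hmm : fmin S ≠ fmax S := fmin_ne_fmax (by omega)
  have hS : ∀ x ∈ S, x = fmin S ∨ x = fmax S := by
    intro x hx
    by_contra hcon
    push_neg at hcon
    have hsub : {fmin S, fmax S, x} ⊆ S := by
      intro y hy
      simp only [mem_insert, mem_singleton] at hy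
      rcases hy with rfl | rfl | rfl
      · exact fmin_mem hne
      · exact fmax_mem hne
      · exact hx
    have hc3 : ({fmin S, fmax S, x} : Finset V).card = 3 := by
      rw [Finset.card_insert_of_notMem (by simp [hmm, Ne.symm hcon.1]),
        Finset.card_insert_of_notMem (by simp [Ne.symm hcon.2]), card_singleton]
    have := Finset.card_le_card hsub
    omega
  have hadjmM : T.Adj (fmin S) (fmax S) := by
    obtain ⟨w⟩ := hT.2.1 (fmin S) (fmin_mem hne) (fmax S) (fmax_mem hne)
    have hw : ¬ w.Nil := SimpleGraph.Walk.not_nil_of_ne hmm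
    have hadj' := (w.firstDart hw).adj
    rcases hS _ (hT.adj_mem hadj').2 with h1 | h1
    · rw [h1] at hadj'; exact absurd rfl hadj'.ne
    · rwa [h1] at hadj'
  ext x y
  rw [fromEdgeSet_adj, Set.mem_singleton_iff, Sym2.eq_iff]
  constructor
  · intro h
    refine ⟨?_, h.ne⟩
    rcases hS _ (hT.adj_mem h).1 with h1 | h1 <;> rcases hS _ (hT.adj_mem h).2 with h1' | h1'
    · rw [h1, h1'] at h; exact absurd rfl h.ne
    · exact Or.inl ⟨h1, h1'⟩
    · exact Or.inr ⟨h1, h1'⟩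
    · rw [h1, h1'] at h; exact absurd rfl h.ne
  · rintro ⟨⟨rfl, rfl⟩ | ⟨rfl, rfl⟩, hne'⟩
    · exact hadjmM
    · exact hadjmM.symm

/-- A path between vertices different from a leaf `ℓ` avoids `ℓ`. -/
lemma path_avoid (hT : IsTreeOn S T) {l : V} (hd : T.degree l = 1) {u v : V}
    (hu : u ≠ l) (hv : v ≠ l) (p : T.Walk u v) (hp : p.IsPath) : l ∉ p.support := by
  intro hmem
  set a := nbr T l with ha
  have huniq : ∀ z, T.Adj l z → z = a := fun z hz => nbr_eq hd hz
  have hq := hp.takeUntil hmem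
  have hr := hp.dropUntil hmem
  set q := p.takeUntil l hmem with hqdef
  set r := p.dropUntil l hmem with hrdef
  have hqnil : ¬ q.reverse.Nil := SimpleGraph.Walk.not_nil_of_ne (Ne.symm hu)
  have hrnil : ¬ r.Nil := SimpleGraph.Walk.not_nil_of_ne (Ne.symm hv)
  have h1 := (start_edge_mem huniq q.reverse hqnil).2
  have h2 := (start_edge_mem huniq r hrnil).2
  have haq : a ∈ q.support := by
    have := List.mem_of_mem_tail h1
    rwa [Walk.support_reverse, List.mem_reverse] at this
  have har : a ∈ r.support.tail := h2
  have hnd : (q.append r).support.Nodup := by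
    rw [hqdef, hrdef, Walk.take_spec]
    exact hp.support_nodup
  rw [Walk.support_append, List.nodup_append] at hnd
  exact hnd.2.2 a haq a har rfl

section DeleteEdge

variable {l a : V}

lemma sym2_eq_cases {x y l a : V} (h : s(x, y) = s(l, a)) :
    (x = l ∧ y = a) ∨ (x = a ∧ y = l) := by
  rwa [Sym2.eq_iff] at h

lemma deg_delete_other (hl : l ≠ a) {v : V} (hv : v ≠ l) (hv' : v ≠ a) :
    (T.deleteEdges {s(l, a)}).degree v = T.degree v := by
  have hnb : (T.deleteEdges {s(l, a)}).neighborFinset v = T.neighborFinset v := by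
    ext x
    rw [mem_neighborFinset, mem_neighborFinset, deleteEdges_adj, Set.mem_singleton_iff]
    constructor
    · exact fun h => h.1
    · intro h
      refine ⟨h, fun hcon => ?_⟩
      rcases sym2_eq_cases hcon with ⟨h1, _⟩ | ⟨h1, _⟩
      · exact hv h1
      · exact hv' h1
  rw [SimpleGraph.degree, SimpleGraph.degree, hnb]

lemma deg_delete_a (hadj : T.Adj l a) :
    T.degree a = (T.deleteEdges {s(l, a)}).degree a + 1 := by
  have hne : l ≠ a := hadj.ne
  have hnb : (T.deleteEdges {s(l, a)}).neighborFinset a = (T.neighborFinset a).erase l := by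
    ext x
    rw [mem_erase, mem_neighborFinset, mem_neighborFinset, deleteEdges_adj,
      Set.mem_singleton_iff]
    constructor
    · rintro ⟨h1, h2⟩
      refine ⟨fun hcon => ?_, h1⟩
      subst hcon
      exact h2 (Sym2.eq_swap)
    · rintro ⟨h1, h2⟩
      refine ⟨h2, fun hcon => ?_⟩
      rcases sym2_eq_cases hcon with ⟨h3, _⟩ | ⟨_, h4⟩
      · exact hne h3.symm
      · exact h1 h4
  have hmem : l ∈ T.neighborFinset a := by rw [mem_neighborFinset]; exact hadj.symm
  have hpos : 0 < (T.neighborFinset a).card := Finset.card_pos.mpr ⟨l, hmem⟩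
  rw [SimpleGraph.degree, SimpleGraph.degree, hnb, Finset.card_erase_of_mem hmem]
  omega

lemma deg_delete_leaf (hd : T.degree l = 1) :
    (T.deleteEdges {s(l, nbr T l)}).degree l = 0 := by
  rw [SimpleGraph.degree, Finset.card_eq_zero]
  ext x
  rw [mem_neighborFinset, deleteEdges_adj, Set.mem_singleton_iff]
  simp only [Finset.notMem_empty, iff_false, not_and, not_not]
  intro h
  rw [Sym2.eq_iff]
  exact Or.inl ⟨rfl, (nbr_eq hd h)⟩

lemma delete_sup_eq (hadj : T.Adj l a) :
    T.deleteEdges {s(l, a)} ⊔ SimpleGraph.fromEdgeSet {s(l, a)} = T := by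
  apply SimpleGraph.edgeSet_injective
  rw [edgeSet_sup, edgeSet_deleteEdges, edgeSet_fromEdgeSet]
  have h1 : ({s(l, a)} : Set (Sym2 V)) \ {e | e.IsDiag} = {s(l, a)} := by
    ext e
    simp only [Set.mem_diff, Set.mem_singleton_iff, Set.mem_setOf_eq, and_iff_left_iff_imp]
    rintro rfl
    simp [hadj.ne]
  rw [show Sym2.diagSet = {e : Sym2 V | e.IsDiag} from rfl, h1]
  exact Set.diff_union_of_subset (by simp [hadj])

/-- removing a leaf from a tree gives a tree -/
lemma isTreeOn_erase (hT : IsTreeOn S T) (hl : l ∈ S) (hd : T.degree l = 1) :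
    IsTreeOn (S.erase l) (T.deleteEdges {s(l, nbr T l)}) := by
  set a := nbr T l with ha
  refine ⟨?_, ?_, ?_⟩
  · intro x y h
    rw [deleteEdges_adj, Set.mem_singleton_iff] at h
    rw [mem_erase]
    refine ⟨?_, (hT.adj_mem h.1).1⟩
    rintro rfl
    exact h.2 (by rw [Sym2.eq_iff]; exact Or.inl ⟨rfl, nbr_eq hd h.1⟩)
  · intro x hx y hy
    rw [mem_erase] at hx hy
    obtain ⟨w⟩ := hT.2.1 x hx.2 y hy.2
    have hp := w.toPath
    have hnotmem := path_avoid hT hd hx.1 hy.1 hp.1 hp.2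
    have hedges : ∀ e ∈ (hp.1 : T.Walk x y).edges, e ∈ (T.deleteEdges {s(l, a)}).edgeSet := by
      intro e he
      have h1 := (hp.1 : T.Walk x y).edges_subset_edgeSet he
      rw [SimpleGraph.edgeSet_deleteEdges]
      refine ⟨h1, ?_⟩
      intro hcon
      rw [Set.mem_singleton_iff] at hcon
      subst hcon
      exact hnotmem (Walk.fst_mem_support_of_mem_edges _ he)
    exact ((hp.1 : T.Walk x y).transfer _ hedges).reachable
  · intro v c hc
    exact hT.2.2 _ (hc.mapLe (SimpleGraph.deleteEdges_le _))

end DeleteEdge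
section AddEdge

variable {S' : Finset V} {T' : SimpleGraph V} {l a : V}

lemma sup_only_nbr (hT' : IsTreeOn S' T') (hl : l ∉ S') (ha : a ∈ S') :
    ∀ z, (T' ⊔ SimpleGraph.fromEdgeSet {s(l, a)}).Adj l z → z = a := by
  intro z h
  rw [sup_adj] at h
  rcases h with h | h
  · exact absurd (hT'.adj_mem h).1 hl
  · rw [fromEdgeSet_adj, Set.mem_singleton_iff] at h
    rcases sym2_eq_cases h.1 with ⟨_, h2⟩ | ⟨h1, _⟩
    · exact h2
    · exact absurd (h1 ▸ ha) hl

lemma sup_adj_la (hl : l ∉ S') (ha : a ∈ S') :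
    (T' ⊔ SimpleGraph.fromEdgeSet {s(l, a)}).Adj l a := by
  rw [sup_adj, fromEdgeSet_adj]
  exact Or.inr ⟨rfl, fun h => hl (h ▸ ha)⟩

lemma sup_nbrFinset_l (hT' : IsTreeOn S' T') (hl : l ∉ S') (ha : a ∈ S') :
    (T' ⊔ SimpleGraph.fromEdgeSet {s(l, a)}).neighborFinset l = {a} := by
  ext x
  rw [mem_neighborFinset, mem_singleton]
  exact ⟨fun h => sup_only_nbr hT' hl ha x h, fun h => by subst h; exact sup_adj_la hl ha⟩

lemma sup_deg_l (hT' : IsTreeOn S' T') (hl : l ∉ S') (ha : a ∈ S') :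
    (T' ⊔ SimpleGraph.fromEdgeSet {s(l, a)}).degree l = 1 := by
  rw [SimpleGraph.degree, sup_nbrFinset_l hT' hl ha, card_singleton]

lemma sup_deg_a (hT' : IsTreeOn S' T') (hl : l ∉ S') (ha : a ∈ S') :
    (T' ⊔ SimpleGraph.fromEdgeSet {s(l, a)}).degree a = T'.degree a + 1 := by
  have hla : l ≠ a := fun h => hl (h ▸ ha)
  have hnb : (T' ⊔ SimpleGraph.fromEdgeSet {s(l, a)}).neighborFinset a =
      insert l (T'.neighborFinset a) := by
    ext x
    rw [mem_neighborFinset, mem_insert, mem_neighborFinset, sup_adj, fromEdgeSet_adj,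
      Set.mem_singleton_iff]
    constructor
    · rintro (h | ⟨h1, _⟩)
      · exact Or.inr h
      · rcases sym2_eq_cases h1 with ⟨h2, _⟩ | ⟨_, h3⟩
        · exact absurd h2 hla.symm
        · exact Or.inl h3
    · rintro (rfl | h)
      · exact Or.inr ⟨Sym2.eq_swap, hla.symm⟩
      · exact Or.inl h
  rw [SimpleGraph.degree, SimpleGraph.degree, hnb, Finset.card_insert_of_notMem]
  rw [mem_neighborFinset]
  intro h
  exact hl (hT'.adj_mem h).2

lemma sup_deg_other (hT' : IsTreeOn S' T') (hl : l ∉ S') (ha : a ∈ S') {v : V}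
    (hvl : v ≠ l) (hva : v ≠ a) :
    (T' ⊔ SimpleGraph.fromEdgeSet {s(l, a)}).degree v = T'.degree v := by
  have hnb : (T' ⊔ SimpleGraph.fromEdgeSet {s(l, a)}).neighborFinset v =
      T'.neighborFinset v := by
    ext x
    rw [mem_neighborFinset, mem_neighborFinset, sup_adj, fromEdgeSet_adj,
      Set.mem_singleton_iff]
    constructor
    · rintro (h | ⟨h1, _⟩)
      · exact h
      · rcases sym2_eq_cases h1 with ⟨h2, _⟩ | ⟨h2, _⟩
        · exact absurd h2 hvl
        · exact absurd h2 hva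
    · exact fun h => Or.inl h
  rw [SimpleGraph.degree, SimpleGraph.degree, hnb]

lemma sup_delete_eq (hT' : IsTreeOn S' T') (hl : l ∉ S') :
    (T' ⊔ SimpleGraph.fromEdgeSet {s(l, a)}).deleteEdges {s(l, a)} = T' := by
  ext x y
  rw [deleteEdges_adj, sup_adj, fromEdgeSet_adj, Set.mem_singleton_iff]
  constructor
  · rintro ⟨h | ⟨h1, _⟩, h2⟩
    · exact h
    · exact absurd h1 h2
  · intro h
    refine ⟨Or.inl h, fun hcon => ?_⟩
    rcases sym2_eq_cases hcon with ⟨h1, _⟩ | ⟨_, h2⟩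
    · exact hl (h1 ▸ (hT'.adj_mem h).1)
    · exact hl (h2 ▸ (hT'.adj_mem h).2)

/-- adding a pendant edge to a tree gives a tree -/
lemma isTreeOn_insert (hT' : IsTreeOn S' T') (hl : l ∉ S') (ha : a ∈ S') :
    IsTreeOn (insert l S') (T' ⊔ SimpleGraph.fromEdgeSet {s(l, a)}) := by
  have hla : l ≠ a := fun h => hl (h ▸ ha)
  set G := T' ⊔ SimpleGraph.fromEdgeSet {s(l, a)} with hG
  refine ⟨?_, ?_, ?_⟩
  · intro x y h
    rw [hG, sup_adj, fromEdgeSet_adj, Set.mem_singleton_iff] at h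
    rcases h with h | ⟨h1, _⟩
    · exact mem_insert_of_mem (hT'.adj_mem h).1
    · rcases sym2_eq_cases h1 with ⟨h2, _⟩ | ⟨h2, _⟩
      · exact h2 ▸ mem_insert_self l S'
      · exact h2 ▸ mem_insert_of_mem ha
  · have key : ∀ x ∈ insert l S', G.Reachable x a := by
      intro x hx
      rcases mem_insert.mp hx with h | hx'
      · subst h
        exact (sup_adj_la hl ha).reachable
      · exact (hT'.2.1 x hx' a ha).mono le_sup_left
    intro x hx y hy
    exact (key x hx).trans (key y hy).symm
  · intro v c hc
    by_cases hmem : l ∈ c.support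
    · have hc2 := hc.rotate hmem
      set c2 := c.rotate l hmem with hc2def
      have huniq := sup_only_nbr hT' hl ha
      cases hcase : c2 with
      | nil => rw [hcase] at hc2; exact absurd rfl hc2.ne_nil
      | @cons _ z _ hadj r =>
        rw [hcase] at hc2
        have hz : z = a := huniq z hadj
        subst hz
        rw [Walk.cons_isCycle_iff] at hc2
        -- first step of r.reverse from l is also to a, giving the edge s(l,a) in r
        have hrnil : ¬ r.reverse.Nil := SimpleGraph.Walk.not_nil_of_ne hla
        have hkey := (start_edge_mem huniq r.reverse hrnil).1
        rw [Walk.edges_reverse, List.mem_reverse] at hkey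
        exact hc2.2 hkey
    · have hedges : ∀ e ∈ c.edges, e ∈ T'.edgeSet := by
        intro e he
        have h1 := c.edges_subset_edgeSet he
        rw [hG, edgeSet_sup] at h1
        rcases h1 with h1 | h1
        · exact h1
        · rw [edgeSet_fromEdgeSet] at h1
          rcases h1 with ⟨h2, _⟩
          rw [Set.mem_singleton_iff] at h2
          subst h2
          exact absurd (Walk.fst_mem_support_of_mem_edges _ he) hmem
      exact hT'.2.2 _ (hc.transfer hedges)

end AddEdge
lemma mem_pair (h2 : S.card = 2) {x : V} (hx : x ∈ S) : x = fmin S ∨ x = fmax S := by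
  have hne : S.Nonempty := card_pos.mp (by omega)
  have hmm : fmin S ≠ fmax S := fmin_ne_fmax (by omega)
  by_contra hcon
  push_neg at hcon
  have hsub : {fmin S, fmax S, x} ⊆ S := by
    intro y hy
    simp only [mem_insert, mem_singleton] at hy
    rcases hy with rfl | rfl | rfl
    · exact fmin_mem hne
    · exact fmax_mem hne
    · exact hx
  have hc3 : ({fmin S, fmax S, x} : Finset V).card = 3 := by
    rw [Finset.card_insert_of_notMem (by simp [hmm, Ne.symm hcon.1]),
      Finset.card_insert_of_notMem (by simp [Ne.symm hcon.2]), card_singleton]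
  have := Finset.card_le_card hsub
  omega

lemma pair_degree {x y : V} (hne : x ≠ y) :
    (SimpleGraph.fromEdgeSet {s(x, y)}).degree x = 1 := by
  rw [SimpleGraph.degree]
  have : (SimpleGraph.fromEdgeSet {s(x, y)}).neighborFinset x = {y} := by
    ext z
    rw [mem_neighborFinset, mem_singleton, fromEdgeSet_adj, Set.mem_singleton_iff]
    constructor
    · rintro ⟨h1, h2⟩
      rcases sym2_eq_cases h1 with ⟨_, h3⟩ | ⟨_, h3⟩
      · exact h3
      · exact absurd h3.symm h2
    · rintro rfl
      exact ⟨rfl, hne⟩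
  rw [this, card_singleton]

lemma pair_comm (x y : V) :
    SimpleGraph.fromEdgeSet {s(x, y)} = SimpleGraph.fromEdgeSet {s(y, x)} := by
  rw [Sym2.eq_swap]

lemma minLeaf_spec (hT : IsTreeOn S T) (h2 : 2 ≤ S.card) :
    minLeaf S T ∈ S ∧ T.degree (minLeaf S T) = 1 := by
  obtain ⟨v, hv, hv1⟩ := exists_leaf hT h2
  have hne : (S.filter fun v => T.degree v = 1).Nonempty := ⟨v, mem_filter.mpr ⟨hv, hv1⟩⟩
  have := fmin_mem hne
  rw [← minLeaf] at this
  exact ⟨(mem_filter.mp this).1, (mem_filter.mp this).2⟩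

lemma encode_spec : ∀ (k : ℕ) (S : Finset V) (T : SimpleGraph V), IsTreeOn S T →
    S.card = k + 2 → (encode k S T).length = k ∧ ∀ x ∈ encode k S T, x ∈ S
  | 0, S, T, _, _ => by simp [encode]
  | (k+1), S, T, hT, hcard => by
    obtain ⟨hlS, hld⟩ := minLeaf_spec hT (by omega)
    set l := minLeaf S T with hl
    set a := nbr T l with ha
    have hadj : T.Adj l a := nbr_adj hld
    have hT' : IsTreeOn (S.erase l) (T.deleteEdges {s(l, a)}) := isTreeOn_erase hT hlS hld
    have hcard' : (S.erase l).card = k + 2 := by rw [card_erase_of_mem hlS]; omega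
    obtain ⟨ih1, ih2⟩ := encode_spec k (S.erase l) (T.deleteEdges {s(l, a)}) hT' hcard'
    have hunfold : encode (k+1) S T = a :: encode k (S.erase l) (T.deleteEdges {s(l, a)}) := rfl
    constructor
    · rw [hunfold, List.length_cons, ih1]
    · intro x hx
      rw [hunfold, List.mem_cons] at hx
      rcases hx with rfl | hx
      · exact (hT.adj_mem hadj).2
      · exact mem_of_mem_erase (ih2 x hx)

lemma encode_mem_iff : ∀ (k : ℕ) (S : Finset V) (T : SimpleGraph V), IsTreeOn S T →
    S.card = k + 2 → ∀ v ∈ S, (v ∈ encode k S T ↔ 2 ≤ T.degree v)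
  | 0, S, T, hT, hcard => by
    intro v hv
    have hTeq := isTreeOn_pair_unique hT hcard
    have hmm : fmin S ≠ fmax S := fmin_ne_fmax (by omega)
    have hdeg : T.degree v = 1 := by
      rcases mem_pair hcard hv with rfl | rfl
      · rw [hTeq]; exact pair_degree hmm
      · rw [hTeq, pair_comm]; exact pair_degree hmm.symm
    simp [encode, hdeg]
  | (k+1), S, T, hT, hcard => by
    intro v hv
    obtain ⟨hlS, hld⟩ := minLeaf_spec hT (by omega)
    set l := minLeaf S T with hl
    set a := nbr T l with ha
    have hadj : T.Adj l a := nbr_adj hld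
    have hT' : IsTreeOn (S.erase l) (T.deleteEdges {s(l, a)}) := isTreeOn_erase hT hlS hld
    have hcard' : (S.erase l).card = k + 2 := by rw [card_erase_of_mem hlS]; omega
    have haS : a ∈ S.erase l := mem_erase.mpr ⟨hadj.ne', (hT.adj_mem hadj).2⟩
    have hunfold : encode (k+1) S T = a :: encode k (S.erase l) (T.deleteEdges {s(l, a)}) := rfl
    rw [hunfold, List.mem_cons]
    rcases eq_or_ne v l with hvl | hvl
    · subst hvl
      have hnotmem : l ∉ encode k (S.erase l) (T.deleteEdges {s(l, a)}) := fun hmem =>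
        (Finset.notMem_erase l S) ((encode_spec k _ _ hT' hcard').2 l hmem)
      constructor
      · rintro (h' | h')
        · exact absurd h' hadj.ne
        · exact absurd h' hnotmem
      · rw [hld]; omega
    rcases eq_or_ne v a with hva | hva
    · subst hva
      have h1 : 1 ≤ (T.deleteEdges {s(l, a)}).degree a := degree_pos hT' (by omega) haS
      have h2 := deg_delete_a hadj
      constructor
      · intro _; omega
      · intro _; exact Or.inl rfl
    · have hvS' : v ∈ S.erase l := mem_erase.mpr ⟨hvl, hv⟩
      have ihiff := encode_mem_iff k (S.erase l) (T.deleteEdges {s(l, a)}) hT' hcard' v hvS'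
      have hdeq : (T.deleteEdges {s(l, a)}).degree v = T.degree v :=
        deg_delete_other hadj.ne hvl hva
      rw [hdeq] at ihiff
      constructor
      · rintro (h' | h')
        · exact absurd h' hva
        · exact ihiff.mp h'
      · intro h'
        exact Or.inr (ihiff.mpr h')

lemma decode_unfold (k : ℕ) (S : Finset V) (a : V) (s : List V) :
    decode (k+1) S (a :: s) =
      decode k (S.erase (fmin (S \ (a :: s).toFinset))) s ⊔
        SimpleGraph.fromEdgeSet {s(fmin (S \ (a :: s).toFinset), a)} := rfl

lemma sdiff_list_nonempty {k : ℕ} (hcard : S.card = k + 3) {a : V} {s : List V}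
    (hlen : s.length = k) : (S \ (a :: s).toFinset).Nonempty := by
  have h1 : (a :: s).toFinset.card ≤ k + 1 := by
    calc (a :: s).toFinset.card ≤ (a :: s).length := List.toFinset_card_le _
      _ = k + 1 := by rw [List.length_cons, hlen]
  have h2 := Finset.le_card_sdiff ((a :: s).toFinset) S
  rw [← card_pos]
  omega

lemma decode_spec : ∀ (k : ℕ) (S : Finset V) (p : List V), S.card = k + 2 →
    p.length = k → (∀ x ∈ p, x ∈ S) →
    IsTreeOn S (decode k S p) ∧ ∀ v ∈ S, (decode k S p).degree v = 1 + p.count v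
  | 0, S, p, hcard, hlen, _ => by
    have hp : p = [] := List.length_eq_zero_iff.mp hlen
    subst hp
    have hmm : fmin S ≠ fmax S := fmin_ne_fmax (by omega)
    refine ⟨isTreeOn_pair hcard, ?_⟩
    intro v hv
    rcases mem_pair hcard hv with rfl | rfl
    · rw [show decode 0 S [] = SimpleGraph.fromEdgeSet {s(fmin S, fmax S)} from rfl]
      rw [pair_degree hmm]
      simp
    · rw [show decode 0 S [] = SimpleGraph.fromEdgeSet {s(fmin S, fmax S)} from rfl]
      rw [pair_comm, pair_degree hmm.symm]
      simp
  | (k+1), S, p, hcard, hlen, hmem => by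
    rcases p with _ | ⟨a, s⟩
    · simp at hlen
    have hlen' : s.length = k := by simpa using hlen
    have hne : (S \ (a :: s).toFinset).Nonempty := sdiff_list_nonempty (by omega) hlen'
    set l := fmin (S \ (a :: s).toFinset) with hldef
    have hlmem := fmin_mem hne
    rw [← hldef, mem_sdiff] at hlmem
    obtain ⟨hlS, hlnot⟩ := hlmem
    rw [List.mem_toFinset] at hlnot
    have hla : l ≠ a := fun h => hlnot (h ▸ (List.mem_cons_self : a ∈ a :: s))
    have hlnots : l ∉ s := fun h => hlnot (List.mem_cons_of_mem a h)
    have haS : a ∈ S := hmem a ((List.mem_cons_self : a ∈ a :: s))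
    have haS' : a ∈ S.erase l := mem_erase.mpr ⟨fun h => hla h.symm, haS⟩
    have hcard' : (S.erase l).card = k + 2 := by rw [card_erase_of_mem hlS]; omega
    have hmem' : ∀ x ∈ s, x ∈ S.erase l := fun x hx =>
      mem_erase.mpr ⟨fun h => hlnots (h ▸ hx), hmem x (List.mem_cons_of_mem a hx)⟩
    obtain ⟨ihT, ihdeg⟩ := decode_spec k (S.erase l) s hcard' hlen' hmem'
    have hlnotin : l ∉ S.erase l := Finset.notMem_erase l S
    have htree := isTreeOn_insert ihT hlnotin haS'
    rw [insert_erase hlS] at htree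
    rw [decode_unfold, ← hldef]
    refine ⟨htree, ?_⟩
    intro v hv
    rcases eq_or_ne v l with hvl | hvl
    · rw [hvl, sup_deg_l ihT hlnotin haS', List.count_eq_zero.mpr hlnot]
    rcases eq_or_ne v a with hva | hva
    · rw [hva, sup_deg_a ihT hlnotin haS', ihdeg a haS', List.count_cons_self]
      ring
    · have hvS' : v ∈ S.erase l := mem_erase.mpr ⟨hvl, hv⟩
      rw [sup_deg_other ihT hlnotin haS' hvl hva, ihdeg v hvS',
        List.count_cons_of_ne hva.symm]

lemma decode_encode : ∀ (k : ℕ) (S : Finset V) (T : SimpleGraph V), IsTreeOn S T →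
    S.card = k + 2 → decode k S (encode k S T) = T
  | 0, S, T, hT, hcard => by
    rw [show encode 0 S T = ([] : List V) from rfl,
      show decode 0 S ([] : List V) = SimpleGraph.fromEdgeSet {s(fmin S, fmax S)} from rfl]
    exact (isTreeOn_pair_unique hT hcard).symm
  | (k+1), S, T, hT, hcard => by
    obtain ⟨hlS, hld⟩ := minLeaf_spec hT (by omega)
    set l := minLeaf S T with hl
    set a := nbr T l with ha
    have hadj : T.Adj l a := nbr_adj hld
    have hT' : IsTreeOn (S.erase l) (T.deleteEdges {s(l, a)}) := isTreeOn_erase hT hlS hld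
    have hcard' : (S.erase l).card = k + 2 := by rw [card_erase_of_mem hlS]; omega
    have hunfold : encode (k+1) S T = a :: encode k (S.erase l) (T.deleteEdges {s(l, a)}) := rfl
    set rest := encode k (S.erase l) (T.deleteEdges {s(l, a)}) with hrest
    have hset : S \ (a :: rest).toFinset = S.filter (fun v => T.degree v = 1) := by
      ext v
      rw [mem_sdiff, mem_filter, List.mem_toFinset]
      constructor
      · rintro ⟨hv, hnot⟩
        refine ⟨hv, ?_⟩
        have h1 := (encode_mem_iff (k+1) S T hT hcard v hv)
        have h2 := degree_pos hT (by omega) hv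
        have h3 : ¬ 2 ≤ T.degree v := fun hcon => by
          have h4 := h1.mpr hcon
          rw [hunfold] at h4
          exact hnot h4
        omega
      · rintro ⟨hv, hdeg⟩
        refine ⟨hv, fun hcon => ?_⟩
        have h1 := (encode_mem_iff (k+1) S T hT hcard v hv).mp (by rw [hunfold]; exact hcon)
        omega
    have hlstar : fmin (S \ (a :: rest).toFinset) = l := by
      rw [hset, hl, minLeaf]
    rw [hunfold, decode_unfold, hlstar,
      decode_encode k (S.erase l) (T.deleteEdges {s(l, a)}) hT' hcard']
    exact delete_sup_eq hadj

lemma encode_decode : ∀ (k : ℕ) (S : Finset V) (p : List V), S.card = k + 2 →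
    p.length = k → (∀ x ∈ p, x ∈ S) → encode k S (decode k S p) = p
  | 0, S, p, hcard, hlen, hmem => by
    have hp : p = [] := List.length_eq_zero_iff.mp hlen
    subst hp
    rfl
  | (k+1), S, p, hcard, hlen, hmem => by
    rcases p with _ | ⟨a, s⟩
    · simp at hlen
    have hlen' : s.length = k := by simpa using hlen
    have hne : (S \ (a :: s).toFinset).Nonempty := sdiff_list_nonempty (by omega) hlen'
    set l := fmin (S \ (a :: s).toFinset) with hldef
    have hlmem := fmin_mem hne
    rw [← hldef, mem_sdiff] at hlmem
    obtain ⟨hlS, hlnot⟩ := hlmem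
    rw [List.mem_toFinset] at hlnot
    have hla : l ≠ a := fun h => hlnot (h ▸ (List.mem_cons_self : a ∈ a :: s))
    have hlnots : l ∉ s := fun h => hlnot (List.mem_cons_of_mem a h)
    have haS : a ∈ S := hmem a ((List.mem_cons_self : a ∈ a :: s))
    have haS' : a ∈ S.erase l := mem_erase.mpr ⟨fun h => hla h.symm, haS⟩
    have hcard' : (S.erase l).card = k + 2 := by rw [card_erase_of_mem hlS]; omega
    have hmem' : ∀ x ∈ s, x ∈ S.erase l := fun x hx =>
      mem_erase.mpr ⟨fun h => hlnots (h ▸ hx), hmem x (List.mem_cons_of_mem a hx)⟩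
    obtain ⟨ihT, ihdeg⟩ := decode_spec k (S.erase l) s hcard' hlen' hmem'
    obtain ⟨hTtree, hTdeg⟩ := decode_spec (k+1) S (a :: s) hcard hlen hmem
    have hlnotin : l ∉ S.erase l := Finset.notMem_erase l S
    set T := decode (k+1) S (a :: s) with hT
    have hTeq : T = decode k (S.erase l) s ⊔ SimpleGraph.fromEdgeSet {s(l, a)} := by
      rw [hT, decode_unfold, hldef]
    -- the minimal leaf of T is l
    have hfilter : S.filter (fun v => T.degree v = 1) = S \ (a :: s).toFinset := by
      ext v
      rw [mem_filter, mem_sdiff, List.mem_toFinset]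
      constructor
      · rintro ⟨hv, hdeg⟩
        refine ⟨hv, fun hcon => ?_⟩
        have h5 := hTdeg v hv
        rw [hdeg] at h5
        have hc0 : List.count v (a :: s) = 0 := by omega
        exact List.count_eq_zero.mp hc0 hcon
      · rintro ⟨hv, hnot⟩
        refine ⟨hv, ?_⟩
        rw [hTdeg v hv, List.count_eq_zero.mpr hnot]
    have hminleaf : minLeaf S T = l := by
      rw [minLeaf, hfilter, hldef]
    have hnbrfin : T.neighborFinset l = {a} := by
      ext z
      rw [mem_neighborFinset, mem_singleton, hTeq]
      constructor
      · exact sup_only_nbr ihT hlnotin haS' z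
      · intro h; subst h; exact sup_adj_la hlnotin haS'
    have hnbrT : nbr T l = a := by rw [nbr, hnbrfin, fmin_singleton]
    have hdel : T.deleteEdges {s(l, a)} = decode k (S.erase l) s := by
      rw [hTeq]
      exact sup_delete_eq ihT hlnotin
    have hunfold : encode (k+1) S T =
        nbr T (minLeaf S T) ::
          encode k (S.erase (minLeaf S T))
            (T.deleteEdges {s(minLeaf S T, nbr T (minLeaf S T))}) := rfl
    rw [hunfold, hminleaf, hnbrT, hdel,
      encode_decode k (S.erase l) s hcard' hlen' hmem']
lemma card_lists (S : Finset V) : ∀ k : ℕ,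
    Nat.card {p : List V // p.length = k ∧ ∀ x ∈ p, x ∈ S} = S.card ^ k
  | 0 => by
    have hu : ∀ q : {p : List V // p.length = 0 ∧ ∀ x ∈ p, x ∈ S},
        q = ⟨[], rfl, by simp⟩ := by
      rintro ⟨p, hp, _⟩
      apply Subtype.ext
      simpa using List.length_eq_zero_iff.mp hp
    have : Unique {p : List V // p.length = 0 ∧ ∀ x ∈ p, x ∈ S} :=
      ⟨⟨⟨[], rfl, by simp⟩⟩, hu⟩
    rw [Nat.card_unique, pow_zero]
  | (k+1) => by
    have e : {a // a ∈ S} × {p : List V // p.length = k ∧ ∀ x ∈ p, x ∈ S} ≃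
        {p : List V // p.length = k + 1 ∧ ∀ x ∈ p, x ∈ S} := by
      refine Equiv.ofBijective (fun x => ⟨x.1.1 :: x.2.1, by simp [x.2.2.1], ?_⟩) ⟨?_, ?_⟩
      · intro y hy
        rcases List.mem_cons.mp hy with h | h
        · exact h ▸ x.1.2
        · exact x.2.2.2 y h
      · rintro ⟨⟨a, ha⟩, ⟨p, hp⟩⟩ ⟨⟨b, hb⟩, ⟨q, hq⟩⟩ h
        simp only [Subtype.mk.injEq, List.cons.injEq] at h
        obtain ⟨h1, h2⟩ := h
        subst h1
        simp only [Prod.mk.injEq, Subtype.mk.injEq]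
        exact ⟨trivial, h2⟩
      · rintro ⟨p, hlen, hmem⟩
        rcases p with _ | ⟨a, s⟩
        · simp at hlen
        refine ⟨⟨⟨a, hmem a ((List.mem_cons_self : a ∈ a :: s))⟩,
          ⟨s, by simpa using hlen, fun x hx => hmem x (List.mem_cons_of_mem a hx)⟩⟩, rfl⟩
    rw [← Nat.card_congr e, Nat.card_prod, Nat.card_eq_finsetCard, card_lists S k, pow_succ]
    ring

lemma card_trees_on (S : Finset V) (k : ℕ) (hcard : S.card = k + 2) :
    Nat.card {T : SimpleGraph V // IsTreeOn S T} = S.card ^ k := by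
  rw [← card_lists S k]
  apply Nat.card_congr
  exact {
    toFun := fun T => ⟨encode k S T.1, (encode_spec k S T.1 T.2 hcard).1,
      (encode_spec k S T.1 T.2 hcard).2⟩
    invFun := fun p => ⟨decode k S p.1, (decode_spec k S p.1 hcard p.2.1 p.2.2).1⟩
    left_inv := fun T => Subtype.ext (decode_encode k S T.1 T.2 hcard)
    right_inv := fun p => Subtype.ext (encode_decode k S p.1 hcard p.2.1 p.2.2) }

end CayleyAux

/-- **Cayley's formula**: the number of spanning trees of the complete graph on
`n+1` vertices (i.e. trees on the vertex set `{0,…,n}`) is `(n+1)^(n-1)`. -/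
theorem stmt_0 (n : ℕ) (hn : 1 ≤ n) :
    Nat.card {T : SimpleGraph (Fin (n + 1)) // T.IsTree} = (n + 1) ^ (n - 1) := by
  have h1 : ∀ T : SimpleGraph (Fin (n + 1)),
      T.IsTree ↔ CayleyAux.IsTreeOn Finset.univ T := by
    intro T
    constructor
    · intro h
      exact ⟨fun x y _ => Finset.mem_univ x,
        fun x _ y _ => h.isConnected.preconnected x y, h.IsAcyclic⟩
    · intro h
      exact ⟨⟨fun x y => h.2.1 x (Finset.mem_univ x) y (Finset.mem_univ y)⟩, h.2.2⟩
  rw [Nat.card_congr (Equiv.subtypeEquivRight h1)]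
  have hcard : (Finset.univ : Finset (Fin (n + 1))).card = (n - 1) + 2 := by
    rw [Finset.card_univ, Fintype.card_fin]
    omega
  rw [CayleyAux.card_trees_on _ _ hcard, hcard]
  have : (n - 1) + 2 = n + 1 := by omega
  rw [this]
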